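/- Let n ≥ 1, A ∈ ℂ^{n×n}, t ∈ ℝ, and A(t) = cos(t)·H + sin(t)·K where H = (A + A*)/2 and K = (A − A*)/(2i). Suppose x ∈ ℂⁿ is a unit vector with A(t)x = λx, where λ ∈ ℝ is the largest eigenvalue of the Hermitian matrix A(t). Then x*Ax ∈ F(A) and for every z ∈ F(A) one has Re(e^{−it} z) ≤ Re(e^{−it} · x*Ax); that is, F(A) lies entirely in the closed half-plane { z ∈ ℂ : Re(e^{−it} z) ≤ λ } whose boundary line passes through the point x*Ax. -/

import Mathlib

open Matrix

/-- The quadratic form x*Ax = ⟨x, Ax⟩ for A ∈ ℂ^{n×n} and x ∈ ℂⁿ. -/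
noncomputable def qf {n : ℕ} (A : Matrix (Fin n) (Fin n) ℂ) (x : EuclideanSpace ℂ (Fin n)) : ℂ :=
  inner ℂ x (Matrix.toEuclideanLin A x)

/-- The field of values (numerical range) F(A) = { x*Ax : ‖x‖ = 1 }. -/
noncomputable def numericalRange {n : ℕ} (A : Matrix (Fin n) (Fin n) ℂ) : Set ℂ :=
  { z | ∃ x : EuclideanSpace ℂ (Fin n), ‖x‖ = 1 ∧ qf A x = z }

/-- The Hermitian part H = (A + A*)/2. -/
noncomputable def hermPart {n : ℕ} (A : Matrix (Fin n) (Fin n) ℂ) : Matrix (Fin n) (Fin n) ℂ :=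
  (2 : ℂ)⁻¹ • (A + Aᴴ)

/-- The skew part K = (A − A*)/(2i). -/
noncomputable def skewPart {n : ℕ} (A : Matrix (Fin n) (Fin n) ℂ) : Matrix (Fin n) (Fin n) ℂ :=
  (2 * Complex.I)⁻¹ • (A - Aᴴ)

/-- The Hermitian matrix flow A(t) = cos(t)·H + sin(t)·K. -/
noncomputable def matFlow {n : ℕ} (A : Matrix (Fin n) (Fin n) ℂ) (t : ℝ) : Matrix (Fin n) (Fin n) ℂ :=
  (Real.cos t : ℂ) • hermPart A + (Real.sin t : ℂ) • skewPart A

lemma matFlow_eq {n : ℕ} (A : Matrix (Fin n) (Fin n) ℂ) (t : ℝ) :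
    matFlow A t = ((Complex.exp (-(Complex.I * t)) / 2) • A)
      + (((starRingEnd ℂ) (Complex.exp (-(Complex.I * t))) / 2) • Aᴴ) := by
  have he : Complex.exp (-(Complex.I * t)) = (Real.cos t : ℂ) - (Real.sin t : ℂ) * Complex.I := by
    rw [show -(Complex.I * (t:ℂ)) = ((-t : ℝ) : ℂ) * Complex.I by push_cast; ring,
      Complex.exp_mul_I]
    push_cast
    simp [Complex.cos_neg, Complex.sin_neg, ← Complex.ofReal_cos, ← Complex.ofReal_sin]
    ring
  ext i j
  simp [matFlow, hermPart, skewPart, he, map_sub, _root_.map_mul, Matrix.add_apply,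
    Matrix.smul_apply, Matrix.sub_apply, smul_eq_mul, Complex.ext_iff]
  constructor <;> ring

lemma matFlow_isHermitian {n : ℕ} (A : Matrix (Fin n) (Fin n) ℂ) (t : ℝ) :
    (matFlow A t).IsHermitian := by
  rw [Matrix.IsHermitian, matFlow_eq, Matrix.conjTranspose_add, Matrix.conjTranspose_smul,
    Matrix.conjTranspose_smul, Matrix.conjTranspose_conjTranspose]
  simp only [star_div₀, RCLike.star_def, Complex.conj_conj, map_ofNat]
  exact add_comm _ _

lemma qf_conjTranspose {n : ℕ} (A : Matrix (Fin n) (Fin n) ℂ) (x : EuclideanSpace ℂ (Fin n)) :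
    qf Aᴴ x = (starRingEnd ℂ) (qf A x) := by
  rw [qf, qf, Matrix.toEuclideanLin_conjTranspose_eq_adjoint, LinearMap.adjoint_inner_right,
    ← inner_conj_symm]

lemma qf_smul {n : ℕ} (c : ℂ) (A : Matrix (Fin n) (Fin n) ℂ) (x : EuclideanSpace ℂ (Fin n)) :
    qf (c • A) x = c * qf A x := by
  simp [qf, inner_smul_right]

lemma qf_add {n : ℕ} (A B : Matrix (Fin n) (Fin n) ℂ) (x : EuclideanSpace ℂ (Fin n)) :
    qf (A + B) x = qf A x + qf B x := by
  simp [qf, inner_add_right]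

lemma qf_matFlow {n : ℕ} (A : Matrix (Fin n) (Fin n) ℂ) (t : ℝ) (y : EuclideanSpace ℂ (Fin n)) :
    qf (matFlow A t) y = (((Complex.exp (-(Complex.I * t)) * qf A y).re : ℝ) : ℂ) := by
  set e := Complex.exp (-(Complex.I * t)) with he
  set z := qf A y with hz
  have h1 : qf (matFlow A t) y = (e * z + (starRingEnd ℂ) (e * z)) / 2 := by
    rw [matFlow_eq, qf_add, qf_smul, qf_smul, qf_conjTranspose, _root_.map_mul]
    ring
  rw [h1, Complex.add_conj]
  push_cast
  ring

lemma rayleigh_le {n : ℕ} {M : Matrix (Fin n) (Fin n) ℂ} (hM : M.IsHermitian) {lam : ℝ}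
    (h : ∀ i, hM.eigenvalues i ≤ lam) (y : EuclideanSpace ℂ (Fin n)) (hy : ‖y‖ = 1) :
    (qf M y).re ≤ lam := by
  classical
  set b := hM.eigenvectorBasis with hb
  set T := Matrix.toEuclideanLin M with hT
  set c : Fin n → ℝ := fun i => Complex.normSq (inner ℂ (b i) y) with hcdef
  have hc : ∀ i, (inner ℂ y (b i) : ℂ) * inner ℂ (b i) y = (c i : ℂ) := by
    intro i
    rw [← inner_conj_symm, ← Complex.normSq_eq_conj_mul_self]
  have hTb : ∀ i, T (b i) = (hM.eigenvalues i : ℂ) • b i := by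
    intro i
    ext j
    simpa [hT, Matrix.toEuclideanLin_apply] using congrFun (hM.mulVec_eigenvectorBasis i) j
  have hsym := (Matrix.isHermitian_iff_isSymmetric.1 hM)
  have hqf : qf M y = ∑ i, ((hM.eigenvalues i : ℂ) * (c i : ℂ)) := by
    rw [qf, ← b.sum_inner_mul_inner y (T y)]
    refine Finset.sum_congr rfl fun i _ => ?_
    rw [← hsym (b i) y, hTb i, inner_smul_left]
    simp only [Complex.conj_ofReal]
    rw [← hc i]; ring
  have hsum1 : ∑ i, c i = 1 := by
    have h1 : (∑ i, (c i : ℂ)) = inner ℂ y y := by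
      rw [← b.sum_inner_mul_inner y y]
      exact Finset.sum_congr rfl fun i _ => (hc i).symm
    rw [inner_self_eq_norm_sq_to_K, hy] at h1
    have : ((∑ i, c i : ℝ) : ℂ) = ((1 : ℝ) : ℂ) := by push_cast at h1 ⊢; simpa using h1
    exact_mod_cast this
  have hreal : qf M y = ((∑ i, hM.eigenvalues i * c i : ℝ) : ℂ) := by
    rw [hqf]; push_cast; ring_nf
  rw [hreal, Complex.ofReal_re]
  calc ∑ i, hM.eigenvalues i * c i ≤ ∑ i, lam * c i := by
        refine Finset.sum_le_sum fun i _ => ?_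
        exact mul_le_mul_of_nonneg_right (h i) (Complex.normSq_nonneg _)
    _ = lam := by rw [← Finset.mul_sum, hsum1, mul_one]

/-- if x is a unit eigenvector of A(t) for its largest eigenvalue λ, then
x*Ax ∈ F(A) and Re(e^{−it}z) ≤ Re(e^{−it}·x*Ax) for all z ∈ F(A); i.e. F(A) lies in the
half-plane { z : Re(e^{−it}z) ≤ λ }. -/
theorem eigenvector_gives_supporting_halfplane (n : ℕ) (hn : 1 ≤ n)
    (A : Matrix (Fin n) (Fin n) ℂ) (t : ℝ) (lam : ℝ)
    (hlam : IsGreatest {r : ℝ | (r : ℂ) ∈ spectrum ℂ (matFlow A t)} lam)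
    (x : EuclideanSpace ℂ (Fin n)) (hx : ‖x‖ = 1)
    (heig : Matrix.toEuclideanLin (matFlow A t) x = (lam : ℂ) • x) :
    qf A x ∈ numericalRange A ∧
      (∀ z ∈ numericalRange A,
        (Complex.exp (-(Complex.I * t)) * z).re ≤
          (Complex.exp (-(Complex.I * t)) * qf A x).re) ∧
      numericalRange A ⊆ { z : ℂ | (Complex.exp (-(Complex.I * t)) * z).re ≤ lam } := by
  have hM := matFlow_isHermitian A t
  have hev : ∀ i, hM.eigenvalues i ≤ lam := by
    intro i
    apply hlam.2
    have := hM.eigenvalues_mem_spectrum_real i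
    have h2 := spectrum.algebraMap_mem (R := ℝ) ℂ this
    simpa using h2
  have hbound : ∀ y : EuclideanSpace ℂ (Fin n), ‖y‖ = 1 →
      (Complex.exp (-(Complex.I * t)) * qf A y).re ≤ lam := by
    intro y hy
    have h1 := rayleigh_le hM hev y hy
    rw [qf_matFlow, Complex.ofReal_re] at h1
    exact h1
  have hx_eq : (Complex.exp (-(Complex.I * t)) * qf A x).re = lam := by
    have h1 : qf (matFlow A t) x = (lam : ℂ) := by
      rw [qf, heig, inner_smul_right, inner_self_eq_norm_sq_to_K, hx]
      norm_num
    rw [qf_matFlow] at h1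
    exact_mod_cast h1
  refine ⟨⟨x, hx, rfl⟩, ?_, ?_⟩
  · rintro z ⟨y, hy, rfl⟩
    rw [hx_eq]
    exact hbound y hy
  · rintro z ⟨y, hy, rfl⟩
    exact hbound y hy
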